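/- Let μ be a symmetric probability measure on ℝ with positive density μ(x) with respect to Lebesgue measure. Define ψ(x) := ∫₀^x (y μ(y) / μ([y,∞))) dy for x ≥ 0 and γ(l) := ∫₀^l (1/φ(m)) dm where φ is the inverse of ψ. Then for all x ≥ 0, e^{-γ(ψ(x))} = 2μ([x,∞)). -/

import Mathlib

open MeasureTheory Set

/-- For a symmetric positive density `f`, the Vallois function `ψ` and
`γ(l) = ∫₀^l dm/φ(m)` (with `φ = ψ⁻¹`) satisfy `e^{-γ(ψ(x))} = 2 μ([x,∞))`. -/
theorem stmt4 (f : ℝ → ℝ) (hcont : Continuous f)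
    (hpos : ∀ x, 0 < f x) (hsym : ∀ x, f (-x) = f x)
    (hInt : Integrable f) (hprob : ∫ x, f x = 1)
    (ψ φ γ : ℝ → ℝ)
    (hψ : ∀ x : ℝ, 0 ≤ x →
      ψ x = ∫ y in (0:ℝ)..x, y * f y / (∫ z in Set.Ici y, f z))
    (hφψ : ∀ x : ℝ, 0 ≤ x → φ (ψ x) = x)
    (hγ : ∀ l : ℝ, 0 ≤ l → γ l = ∫ m in (0:ℝ)..l, 1 / φ m)
    (x : ℝ) (hx : 0 ≤ x) :
    Real.exp (-(γ (ψ x))) = 2 * ∫ z in Set.Ici x, f z := by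
  set F : ℝ → ℝ := fun y => ∫ z in Set.Ici y, f z with hFdef
  -- positivity of F
  have hFpos : ∀ y, 0 < F y := by
    intro y
    rw [hFdef]
    rw [setIntegral_pos_iff_support_of_nonneg_ae
      (Filter.Eventually.of_forall fun t => (hpos t).le) hInt.integrableOn]
    have : Function.support f ∩ Ici y = Ici y := by
      apply inter_eq_self_of_subset_right
      intro t _
      exact (hpos t).ne'
    rw [this, Real.volume_Ici]
    simp
  -- F y = ∫ over Ioi y and relation to Iic
  have hIoi : ∀ y, F y = ∫ z in Ioi y, f z := fun y => integral_Ici_eq_integral_Ioi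
  have hIic : ∀ y, (∫ z in Iic y, f z) + F y = 1 := by
    intro y
    rw [hIoi y, ← hprob]
    exact intervalIntegral.integral_Iic_add_Ioi hInt.integrableOn hInt.integrableOn
  -- value at 0
  have hF0 : F 0 = 1 / 2 := by
    have hs : (∫ z in Iic (0:ℝ), f z) = F 0 := by
      rw [hIoi 0]
      have h1 : (∫ z in Ioi (0:ℝ), f (-z)) = ∫ z in Iic (-(0:ℝ)), f z :=
        integral_comp_neg_Ioi 0 f
      rw [neg_zero] at h1
      rw [← h1]
      exact setIntegral_congr_fun measurableSet_Ioi fun t _ => hsym t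
    have := hIic 0
    rw [hs] at this
    linarith
  -- F y = F 0 - ∫ 0..y f
  have hFeq : ∀ y, F y = F 0 - ∫ t in (0:ℝ)..y, f t := by
    intro y
    have h0 := hIic 0
    have hy := hIic y
    have hsub : (∫ z in Iic y, f z) - (∫ z in Iic (0:ℝ), f z) = ∫ t in (0:ℝ)..y, f t :=
      intervalIntegral.integral_Iic_sub_Iic hInt.integrableOn hInt.integrableOn
    linarith
  -- derivative of F
  have hFderiv : ∀ t, HasDerivAt F (-(f t)) t := by
    intro t
    have h1 : HasDerivAt (fun y => ∫ s in (0:ℝ)..y, f s) (f t) t :=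
      (hcont.integral_hasStrictDerivAt 0 t).hasDerivAt
    have h2 : HasDerivAt (fun y => F 0 - ∫ s in (0:ℝ)..y, f s) (-(f t)) t := by
      simpa using (h1.const_sub (F 0))
    exact h2.congr_of_eventuallyEq (Filter.Eventually.of_forall fun y => hFeq y)
  have hFcont : Continuous F :=
    continuous_iff_continuousAt.2 fun t => (hFderiv t).continuousAt
  -- the density g of ψ
  set g : ℝ → ℝ := fun y => y * f y / F y with hgdef
  have hgcont : Continuous g :=
    ((continuous_id.mul hcont).div hFcont fun t => (hFpos t).ne')
  have hgnonneg : ∀ t, 0 ≤ t → 0 ≤ g t := fun t ht =>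
    div_nonneg (mul_nonneg ht (hpos t).le) (hFpos t).le
  -- ψ agrees with primitive of g on Ici 0
  have hψP : ∀ y : ℝ, 0 ≤ y → ψ y = ∫ s in (0:ℝ)..y, g s := fun y hy => hψ y hy
  have hψ0 : ψ 0 = 0 := by rw [hψP 0 le_rfl, intervalIntegral.integral_same]
  have hψderiv : ∀ t : ℝ, 0 < t → HasDerivAt ψ (g t) t := by
    intro t ht
    have h1 : HasDerivAt (fun y => ∫ s in (0:ℝ)..y, g s) (g t) t :=
      (hgcont.integral_hasStrictDerivAt 0 t).hasDerivAt
    apply h1.congr_of_eventuallyEq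
    filter_upwards [Ioi_mem_nhds ht] with y hy
    exact hψP y (le_of_lt hy)
  have hPc : Continuous (fun y => ∫ s in (0:ℝ)..y, g s) :=
    intervalIntegral.continuous_primitive (fun a b => hgcont.intervalIntegrable a b) 0
  have hψcontOn : ContinuousOn ψ (Ici 0) :=
    hPc.continuousOn.congr fun y hy => hψP y hy
  have hψmono : StrictMonoOn ψ (Ici 0) := by
    apply strictMonoOn_of_deriv_pos (convex_Ici 0) hψcontOn
    intro t ht
    rw [interior_Ici] at ht
    rw [(hψderiv t ht).deriv]
    exact div_pos (mul_pos ht (hpos t)) (hFpos t)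
  have hψx_nonneg : 0 ≤ ψ x := by
    rw [hψP x hx]
    exact intervalIntegral.integral_nonneg hx fun t ht => hgnonneg t ht.1
  -- image of Ioc 0 x under ψ
  have himg : ψ '' Ioc 0 x = Ioc 0 (ψ x) := by
    apply Subset.antisymm
    · rintro m ⟨t, ⟨ht0, htx⟩, rfl⟩
      constructor
      · calc (0:ℝ) = ψ 0 := hψ0.symm
          _ < ψ t := hψmono self_mem_Ici (le_of_lt ht0) ht0
      · exact hψmono.monotoneOn (le_of_lt ht0) hx htx
    · rintro m ⟨hm0, hmx⟩
      have hIVT : Icc (ψ 0) (ψ x) ⊆ ψ '' Icc 0 x :=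
        intermediate_value_Icc hx (hψcontOn.mono Icc_subset_Ici_self)
      obtain ⟨t, ⟨ht0, htx⟩, rfl⟩ := hIVT ⟨by rw [hψ0]; exact hm0.le, hmx⟩
      refine ⟨t, ⟨?_, htx⟩, rfl⟩
      rcases lt_or_eq_of_le ht0 with h | h
      · exact h
      · exfalso; rw [← h, hψ0] at hm0; exact lt_irrefl 0 hm0
  -- key computation
  have key : γ (ψ x) = Real.log (F 0) - Real.log (F x) := by
    rw [hγ (ψ x) hψx_nonneg, intervalIntegral.integral_of_le hψx_nonneg, ← himg,
      integral_image_eq_integral_abs_deriv_smul measurableSet_Ioc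
        (fun t ht => (hψderiv t ht.1).hasDerivWithinAt)
        (hψmono.injOn.mono (Ioc_subset_Icc_self.trans Icc_subset_Ici_self))
        (fun m => 1 / φ m)]
    have hcongr : ∀ t ∈ Ioc 0 x, |g t| • (1 / φ (ψ t)) = f t / F t := by
      intro t ht
      have ht0 : t ≠ 0 := ne_of_gt ht.1
      have hFt : F t ≠ 0 := (hFpos t).ne'
      rw [hφψ t ht.1.le, abs_of_nonneg (hgnonneg t ht.1.le), smul_eq_mul, hgdef]
      field_simp
    rw [setIntegral_congr_fun measurableSet_Ioc hcongr,
      ← intervalIntegral.integral_of_le hx]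
    have hFTC : ∫ t in (0:ℝ)..x, f t / F t
        = (fun y => -Real.log (F y)) x - (fun y => -Real.log (F y)) 0 := by
      apply intervalIntegral.integral_eq_sub_of_hasDerivAt
      · intro t _
        have h1 : HasDerivAt (fun y => Real.log (F y)) (-(f t) / F t) t :=
          (hFderiv t).log (hFpos t).ne'
        have h2 : HasDerivAt (fun y => -Real.log (F y)) (-(-(f t) / F t)) t := h1.neg
        simpa [neg_div] using h2
      · exact (hcont.div hFcont fun t => (hFpos t).ne').intervalIntegrable 0 x
    rw [hFTC]
    ring
  rw [key, hF0]
  have h2F : (0:ℝ) < 2 * F x := by have := hFpos x; linarith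
  have : -(Real.log (1 / 2) - Real.log (F x)) = Real.log (2 * F x) := by
    rw [Real.log_mul (by norm_num) (hFpos x).ne', Real.log_div (by norm_num) (by norm_num)]
    simp [Real.log_one]
    ring
  rw [this, Real.exp_log h2F]
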